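/- For Δ > 0 and M > 0, the infimum of ∫₀^A F(t) dt over all A > 0 and all measurable F: [0,∞) → ℝ with F(t) ≥ Δ on [0,A], F(t) = 0 for t > A, and ∫₀^∞ t·F(t) dt ≥ M, equals √(2MΔ). Moreover, the infimum is attained exactly when F(t) = Δ for almost all t ≤ A and A = √(2M/Δ). -/

import Mathlib

open Real MeasureTheory

lemma var_aux (Δ M : ℝ) (hΔ : 0 < Δ) (hM : 0 < M)
    (A : ℝ) (hA : 0 < A) (F : ℝ → ℝ) (hFmeas : Measurable F)
    (hF1 : ∀ t ∈ Set.Icc (0:ℝ) A, Δ ≤ F t) (hF2 : ∀ t, A < t → F t = 0)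
    (hInt : IntegrableOn F (Set.Ioi (0:ℝ)))
    (hMle : M ≤ ∫ t in Set.Ioi (0:ℝ), t * F t) :
    Real.sqrt (2*M*Δ) ≤ ∫ t in (0:ℝ)..A, F t ∧
    ((∫ t in (0:ℝ)..A, F t) = Real.sqrt (2*M*Δ) ↔
      (A = Real.sqrt (2*M/Δ) ∧ ∀ᵐ t ∂(volume.restrict (Set.Icc (0:ℝ) A)), F t = Δ)) := by
  set s := Real.sqrt (2*M*Δ) with hs
  have hs0 : 0 < s := Real.sqrt_pos.2 (by positivity)
  have hssq : s^2 = 2*M*Δ := Real.sq_sqrt (by positivity)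
  have hIocIcc : Set.Ioc (0:ℝ) A ⊆ Set.Icc 0 A := Set.Ioc_subset_Icc_self
  have hIntOc : IntegrableOn F (Set.Ioc (0:ℝ) A) :=
    hInt.mono_set Set.Ioc_subset_Ioi_self
  have hfin : volume (Set.Ioc (0:ℝ) A) < ⊤ := by
    rw [Real.volume_Ioc]; exact ENNReal.ofReal_lt_top
  have hconstΔ : IntegrableOn (fun _ => Δ) (Set.Ioc (0:ℝ) A) :=
    integrableOn_const hfin.ne
  have hconstAΔ : IntegrableOn (fun _ => A * Δ) (Set.Ioc (0:ℝ) A) :=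
    integrableOn_const hfin.ne
  -- integrability of t * F t on Ioc 0 A
  have hIntt : IntegrableOn (fun t => t * F t) (Set.Ioc (0:ℝ) A) := by
    apply Integrable.mono' ((hIntOc.abs).const_mul A)
      ((measurable_id.mul hFmeas).aestronglyMeasurable)
    rw [ae_restrict_iff' measurableSet_Ioc]
    filter_upwards with t ht
    simp only [Real.norm_eq_abs, Pi.mul_apply, abs_mul, id_eq]
    exact mul_le_mul_of_nonneg_right
      (show |t| ≤ A by rw [abs_of_pos ht.1]; exact ht.2) (abs_nonneg _)
  have hIntt' : IntegrableOn (fun t => t * F t) (Set.Ioi A) := by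
    apply (integrable_zero _ _ _).congr
    rw [Filter.EventuallyEq, ae_restrict_iff' measurableSet_Ioi]
    filter_upwards with t ht
    rw [hF2 t ht, mul_zero]; rfl
  -- split integral
  have hsplit : (∫ t in Set.Ioi (0:ℝ), t * F t) = ∫ t in Set.Ioc (0:ℝ) A, t * F t := by
    rw [← Set.Ioc_union_Ioi_eq_Ioi hA.le,
      setIntegral_union (Set.Ioc_disjoint_Ioi le_rfl) measurableSet_Ioi hIntt hIntt']
    have : (∫ t in Set.Ioi A, t * F t) = 0 := by
      rw [setIntegral_congr_fun measurableSet_Ioi (g := fun _ => (0:ℝ))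
        (fun t ht => by rw [hF2 t ht, mul_zero]), integral_zero]
    rw [this, add_zero]
  -- constants
  have hc1 : (∫ _t in Set.Ioc (0:ℝ) A, Δ) = Δ * A := by
    simp [Real.volume_Ioc, ENNReal.toReal_ofReal hA.le, mul_comm, hA.le]
  have hc1' : (∫ _t in Set.Ioc (0:ℝ) A, A * Δ) = A * Δ * A := by
    simp [Real.volume_Ioc, ENNReal.toReal_ofReal hA.le]; rw [max_eq_left hA.le]; ring
  have hc2 : (∫ t in Set.Ioc (0:ℝ) A, t * Δ) = Δ * A^2 / 2 := by
    rw [← intervalIntegral.integral_of_le hA.le, intervalIntegral.integral_mul_const,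
      integral_id]
    ring
  have hIval : (∫ t in (0:ℝ)..A, F t) = ∫ t in Set.Ioc (0:ℝ) A, F t :=
    intervalIntegral.integral_of_le hA.le
  set I := ∫ t in Set.Ioc (0:ℝ) A, F t with hI
  have hIntc : IntegrableOn (fun t => t * Δ) (Set.Ioc (0:ℝ) A) :=
    (continuous_id.mul continuous_const).integrableOn_Ioc
  have hkey : (∫ t in Set.Ioc (0:ℝ) A, t * F t) - Δ * A^2 / 2 ≤ A * I - A * Δ * A := by
    have hmono : (∫ t in Set.Ioc (0:ℝ) A, (t * F t - t * Δ)) ≤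
        ∫ t in Set.Ioc (0:ℝ) A, (A * F t - A * Δ) := by
      apply setIntegral_mono_on (hIntt.sub hIntc)
        ((hIntOc.const_mul A).sub hconstAΔ) measurableSet_Ioc
      intro t ht
      have h1 : Δ ≤ F t := hF1 t (hIocIcc ht)
      have h2 : t ≤ A := ht.2
      simp only [Pi.sub_apply]
      nlinarith
    rw [integral_sub hIntt hIntc, integral_sub (hIntOc.const_mul A) hconstAΔ,
      hc2, integral_const_mul, hc1'] at hmono
    linarith
  have hMA : M ≤ A * I - Δ * A^2 / 2 := by
    rw [hsplit] at hMle; nlinarith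
  -- lower bound
  have hlow : s ≤ I := by
    have h1 : s * A ≤ M + Δ * A^2 / 2 := by nlinarith [sq_nonneg (Δ*A - s)]
    have h2 : s * A ≤ A * I := by nlinarith
    exact le_of_mul_le_mul_right (by linarith) hA
  refine ⟨hIval ▸ hlow, ?_⟩
  rw [hIval]
  have hres : volume.restrict (Set.Icc (0:ℝ) A) = volume.restrict (Set.Ioc (0:ℝ) A) :=
    (Measure.restrict_congr_set Ioc_ae_eq_Icc).symm
  constructor
  · intro hIs
    rw [hIs] at hMA
    have hDAs : Δ * A = s := by
      have hsq : (Δ * A - s)^2 = 0 := by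
        nlinarith [mul_le_mul_of_nonneg_left hMA hΔ.le, sq_nonneg (Δ*A - s)]
      have h0 := pow_eq_zero_iff (two_ne_zero) |>.mp hsq
      linarith [sub_eq_zero.mp h0]
    have h2M : 2*M*Δ = A^2*Δ*Δ := by
      have h : (Δ*A)^2 = 2*M*Δ := by rw [hDAs]; exact hssq
      linear_combination -h
    have h2M' : 2*M = A^2*Δ :=
      mul_right_cancel₀ hΔ.ne' (by linear_combination h2M)
    have hA2 : 2*M/Δ = A^2 := by
      rw [h2M', mul_div_cancel_right₀ _ hΔ.ne']
    refine ⟨by rw [hA2, Real.sqrt_sq hA.le], ?_⟩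
    have hJ : (∫ t in Set.Ioc (0:ℝ) A, (F t - Δ)) = 0 := by
      rw [integral_sub hIntOc hconstΔ, hc1, ← hI, hIs, hDAs, sub_self]
    have hnn : 0 ≤ᵐ[volume.restrict (Set.Ioc (0:ℝ) A)] fun t => F t - Δ := by
      refine (ae_restrict_iff' measurableSet_Ioc).2 (ae_of_all _ fun t ht => ?_)
      simp only [Pi.zero_apply]
      linarith [hF1 t (hIocIcc ht)]
    have h0 := (integral_eq_zero_iff_of_nonneg_ae hnn (hIntOc.sub hconstΔ)).mp hJ
    rw [hres]
    filter_upwards [h0] with t ht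
    simp only [Pi.zero_apply] at ht
    linarith
  · rintro ⟨hAeq, hae⟩
    have hcongr : I = Δ * A := by
      rw [hI, ← hc1]
      apply integral_congr_ae
      rw [← hres]
      exact hae
    have hsval : s = Δ * Real.sqrt (2*M/Δ) := by
      rw [hs, show 2*M*Δ = Δ^2 * (2*M/Δ) by field_simp,
        Real.sqrt_mul (sq_nonneg Δ), Real.sqrt_sq hΔ.le]
    rw [hcongr, hAeq, hsval]

theorem variational_inf_eq (Δ M : ℝ) (hΔ : 0 < Δ) (hM : 0 < M) :
    (sInf {y : ℝ | ∃ A > (0 : ℝ), ∃ F : ℝ → ℝ, Measurable F ∧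
        (∀ t ∈ Set.Icc (0 : ℝ) A, Δ ≤ F t) ∧ (∀ t, A < t → F t = 0) ∧
        IntegrableOn F (Set.Ioi (0 : ℝ)) ∧
        M ≤ (∫ t in Set.Ioi (0 : ℝ), t * F t) ∧
        y = ∫ t in (0 : ℝ)..A, F t}
      = Real.sqrt (2 * M * Δ)) ∧
    ∀ A > (0 : ℝ), ∀ F : ℝ → ℝ, Measurable F →
      (∀ t ∈ Set.Icc (0 : ℝ) A, Δ ≤ F t) → (∀ t, A < t → F t = 0) →
      IntegrableOn F (Set.Ioi (0 : ℝ)) →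
      M ≤ (∫ t in Set.Ioi (0 : ℝ), t * F t) →
      ((∫ t in (0 : ℝ)..A, F t) = Real.sqrt (2 * M * Δ) ↔
        (A = Real.sqrt (2 * M / Δ) ∧
          ∀ᵐ t ∂(volume.restrict (Set.Icc (0 : ℝ) A)), F t = Δ)) := by
  have hvar := var_aux Δ M hΔ hM
  constructor
  · -- sInf part
    set S := {y : ℝ | ∃ A > (0 : ℝ), ∃ F : ℝ → ℝ, Measurable F ∧
        (∀ t ∈ Set.Icc (0 : ℝ) A, Δ ≤ F t) ∧ (∀ t, A < t → F t = 0) ∧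
        IntegrableOn F (Set.Ioi (0 : ℝ)) ∧
        M ≤ (∫ t in Set.Ioi (0 : ℝ), t * F t) ∧
        y = ∫ t in (0 : ℝ)..A, F t} with hS
    have hlb : ∀ y ∈ S, Real.sqrt (2*M*Δ) ≤ y := by
      rintro y ⟨A, hA, F, hm, h1, h2, h3, h4, rfl⟩
      exact (hvar A hA F hm h1 h2 h3 h4).1
    -- witness
    set A₀ := Real.sqrt (2*M/Δ) with hA₀
    have hA₀pos : 0 < A₀ := Real.sqrt_pos.2 (by positivity)
    have hA₀sq : A₀^2 = 2*M/Δ := Real.sq_sqrt (by positivity)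
    set F₀ : ℝ → ℝ := Set.indicator (Set.Icc (0:ℝ) A₀) (fun _ => Δ) with hF₀
    have hF₀meas : Measurable F₀ := measurable_const.indicator measurableSet_Icc
    have hF₀1 : ∀ t ∈ Set.Icc (0:ℝ) A₀, Δ ≤ F₀ t := fun t ht => by
      rw [hF₀, Set.indicator_of_mem ht]
    have hF₀2 : ∀ t, A₀ < t → F₀ t = 0 := fun t ht => by
      rw [hF₀, Set.indicator_of_notMem (fun h => absurd h.2 (not_le.2 ht))]
    have hF₀int : IntegrableOn F₀ (Set.Ioi (0:ℝ)) := by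
      apply Integrable.integrableOn
      rw [hF₀]
      exact (integrable_indicator_iff measurableSet_Icc).2 (integrableOn_const
        (by rw [Real.volume_Icc]; exact ENNReal.ofReal_ne_top))
    have htF₀ : (fun t => t * F₀ t) = Set.indicator (Set.Icc (0:ℝ) A₀) (fun t => t * Δ) := by
      funext t
      by_cases h : t ∈ Set.Icc (0:ℝ) A₀
      · rw [hF₀, Set.indicator_of_mem h, Set.indicator_of_mem h]
      · rw [hF₀, Set.indicator_of_notMem h, Set.indicator_of_notMem h, mul_zero]
    have hinter : Set.Ioi (0:ℝ) ∩ Set.Icc 0 A₀ = Set.Ioc 0 A₀ := by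
      ext t; simp only [Set.mem_inter_iff, Set.mem_Ioi, Set.mem_Icc, Set.mem_Ioc]
      constructor
      · rintro ⟨h1, _, h2⟩; exact ⟨h1, h2⟩
      · rintro ⟨h1, h2⟩; exact ⟨h1, h1.le, h2⟩
    have hMint : M ≤ ∫ t in Set.Ioi (0:ℝ), t * F₀ t := by
      rw [htF₀, setIntegral_indicator measurableSet_Icc, hinter,
        ← intervalIntegral.integral_of_le hA₀pos.le, intervalIntegral.integral_mul_const,
        integral_id]
      rw [hA₀sq, show (2*M/Δ - 0^2)/2*Δ = M/Δ*Δ by ring, div_mul_cancel₀ _ hΔ.ne']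
    have hsval : Real.sqrt (2*M*Δ) = Δ * A₀ := by
      rw [hA₀, show 2*M*Δ = Δ^2*(2*M/Δ) by field_simp,
        Real.sqrt_mul (sq_nonneg Δ), Real.sqrt_sq hΔ.le]
    have hval : (∫ t in (0:ℝ)..A₀, F₀ t) = Real.sqrt (2*M*Δ) := by
      rw [intervalIntegral.integral_of_le hA₀pos.le, hF₀,
        setIntegral_indicator measurableSet_Icc,
        Set.inter_eq_left.2 Set.Ioc_subset_Icc_self, hsval]
      simp [Real.volume_Ioc, ENNReal.toReal_ofReal hA₀pos.le, mul_comm, hA₀pos.le]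
    have hmem : Real.sqrt (2*M*Δ) ∈ S := by
      refine ⟨A₀, hA₀pos, F₀, hF₀meas, hF₀1, hF₀2, hF₀int, hMint, hval.symm⟩
    exact le_antisymm (csInf_le ⟨_, hlb⟩ hmem) (le_csInf ⟨_, hmem⟩ hlb)
  · intro A hA F hm h1 h2 h3 h4
    exact (hvar A hA F hm h1 h2 h3 h4).2
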